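/- Let p be a prime, let r and m be positive integers, let N ≥ 2^{r+m−1}, and let α be a primitive element of the finite field F_{p^N}. Then the r × m matrix with entry α^{2^{i+j}} in row i and column j, for 0 ≤ i ≤ r−1 and 0 ≤ j ≤ m−1, is superregular. -/

import Mathlib

open Matrix Finset

/-- A matrix over a field is superregular if every minor is nonzero. -/
def Superregular {F : Type*} [Field F] {r ℓ : ℕ} (A : Matrix (Fin r) (Fin ℓ) F) : Prop :=
  ∀ (s : ℕ) (f : Fin s → Fin r) (g : Fin s → Fin ℓ),
    StrictMono f → StrictMono g → (A.submatrix f g).det ≠ 0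

lemma perm_eq_one_of_strictMono {s : ℕ} (σ : Equiv.Perm (Fin s)) (h : StrictMono fun i => σ i) :
    σ = 1 := by
  haveI : WellFoundedLT (Fin s) := inferInstance
  haveI : WellFoundedGT (Fin s) := inferInstance
  exact Equiv.ext fun i => le_antisymm h.apply_le h.le_apply

/-- Strict rearrangement inequality for sums of powers of two. -/
lemma sum_pow_two_perm_lt {s : ℕ} (a b : Fin s → ℕ) (ha : StrictMono a) (hb : StrictMono b)
    (σ : Equiv.Perm (Fin s)) (hσ : σ ≠ 1) :
    ∑ k, 2 ^ (a (σ k) + b k) < ∑ k, 2 ^ (a k + b k) := by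
  have hM : Monovary (fun k => (2 : ℕ) ^ a k) (fun k => (2 : ℕ) ^ b k) := by
    intro i j hij
    have : i < j := by
      by_contra hc
      exact absurd (pow_le_pow_right₀ one_le_two (hb.le_iff_le.mpr (not_lt.mp hc)))
        (not_le.mpr hij)
    exact pow_le_pow_right₀ one_le_two (ha this).le
  have key := hM.sum_comp_perm_mul_lt_sum_mul_iff (σ := σ)
  have hne : ¬ Monovary ((fun k => (2 : ℕ) ^ a k) ∘ σ) (fun k => (2 : ℕ) ^ b k) := by
    intro hmono
    apply hσ
    apply perm_eq_one_of_strictMono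
    intro i j hij
    have h1 : (2 : ℕ) ^ a (σ i) ≤ 2 ^ a (σ j) :=
      hmono (pow_lt_pow_right₀ one_lt_two (hb hij))
    have h2 : a (σ i) ≤ a (σ j) := by
      exact (pow_le_pow_iff_right₀ one_lt_two).mp h1
    have h3 : σ i ≤ σ j := ha.le_iff_le.mp h2
    exact lt_of_le_of_ne h3 (fun hc => (ne_of_lt hij) (σ.injective hc))
  have := key.mpr hne
  calc ∑ k, 2 ^ (a (σ k) + b k) = ∑ k, 2 ^ a (σ k) * 2 ^ b k := by
        simp [pow_add]
    _ < ∑ k, 2 ^ a k * 2 ^ b k := this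
    _ = ∑ k, 2 ^ (a k + b k) := by simp [pow_add]

/-- Bound on a sum of distinct powers of two. -/
lemma sum_pow_two_lt {s n : ℕ} (c : Fin s → ℕ) (hc : Function.Injective c)
    (hbound : ∀ k, c k < n) : ∑ k, 2 ^ c k < 2 ^ n := by
  have h1 : ∑ k, 2 ^ c k = ∑ j ∈ univ.image c, 2 ^ j :=
    (Finset.sum_image (fun x _ y _ h => hc h)).symm
  have h2 : univ.image c ⊆ Finset.range n := by
    intro j hj
    simp only [Finset.mem_image] at hj
    obtain ⟨k, _, rfl⟩ := hj
    exact Finset.mem_range.mpr (hbound k)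
  calc ∑ k, 2 ^ c k ≤ ∑ j ∈ Finset.range n, 2 ^ j := by
        rw [h1]
        exact Finset.sum_le_sum_of_subset h2
    _ = (2 ^ n - 1) / (2 - 1) := Nat.geomSum_eq le_rfl n
    _ = 2 ^ n - 1 := by norm_num
    _ < 2 ^ n := Nat.sub_lt (Nat.pow_pos (n := n) two_pos) one_pos

/-- A primitive element of `F_{p^N}` is not a root of any nonzero polynomial over
`ZMod p` of degree less than `N`. -/
lemma aeval_primitive_ne_zero {F : Type*} [Field F] [Fintype F]
    {p N : ℕ} (hp : p.Prime) (hN0 : 0 < N) (hcard : Fintype.card F = p ^ N)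
    (α : F) (hα : orderOf α = p ^ N - 1) [CharP F p] :
    letI : Algebra (ZMod p) F := ZMod.algebra _ _
    ∀ P : Polynomial (ZMod p), P ≠ 0 → P.natDegree < N → Polynomial.aeval α P ≠ 0 := by
  letI : Algebra (ZMod p) F := ZMod.algebra _ _
  haveI : Fact p.Prime := ⟨hp⟩
  intro P hP hdeg haeval
  -- first: α ≠ 0 and every nonzero element is a power of α
  have hcard1 : 1 < p ^ N := by
    have := hp.two_le
    calc 1 < 2 := one_lt_two
      _ ≤ 2 ^ N := Nat.le_self_pow hN0.ne' 2
      _ ≤ p ^ N := Nat.pow_le_pow_left this N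
  have hα0 : α ≠ 0 := by
    intro h
    have h1 : α ^ (p ^ N - 1) = 1 := hα ▸ pow_orderOf_eq_one α
    rw [h, zero_pow (by omega)] at h1
    exact zero_ne_one h1
  have hpow : ∀ x : F, x ≠ 0 → ∃ n : ℕ, α ^ n = x := by
    intro x hx
    have hu : orderOf (Units.mk0 α hα0) = p ^ N - 1 := by
      rw [← orderOf_units, Units.val_mk0, hα]
    have hcardu : Nat.card Fˣ = p ^ N - 1 := by
      rw [Nat.card_units, Nat.card_eq_fintype_card, hcard]
    have htop : Subgroup.zpowers (Units.mk0 α hα0) = ⊤ := by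
      apply Subgroup.eq_top_of_card_eq
      rw [Nat.card_zpowers, hu, hcardu]
    have hxmem : Units.mk0 x hx ∈ Subgroup.zpowers (Units.mk0 α hα0) := by
      rw [htop]; trivial
    rw [← mem_powers_iff_mem_zpowers] at hxmem
    obtain ⟨n, hn⟩ := hxmem
    exact ⟨n, by
      have := congrArg (Units.val) hn
      simpa using this⟩
  -- the intermediate field generated by α is everything
  have hint : IsIntegral (ZMod p) α := IsIntegral.of_finite (ZMod p) α
  have htop : IntermediateField.adjoin (ZMod p) {α} = ⊤ := by
    rw [eq_top_iff]
    intro x _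
    by_cases hx : x = 0
    · rw [hx]; exact zero_mem _
    · obtain ⟨n, rfl⟩ := hpow x hx
      exact pow_mem (IntermediateField.mem_adjoin_simple_self (ZMod p) α) n
  have hfinrank : Module.finrank (ZMod p) F = N := by
    have hc : Fintype.card F = Fintype.card (ZMod p) ^ Module.finrank (ZMod p) F :=
      Module.card_eq_pow_finrank
    rw [hcard, ZMod.card] at hc
    exact (Nat.pow_right_injective hp.two_le hc).symm
  have hmindeg : (minpoly (ZMod p) α).natDegree = N := by
    rw [← IntermediateField.adjoin.finrank hint, htop, ← hfinrank,
      IntermediateField.finrank_top']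
  -- minpoly divides P, so N ≤ natDegree P < N
  have hdvd : minpoly (ZMod p) α ∣ P := minpoly.dvd (ZMod p) α haeval
  have := Polynomial.natDegree_le_of_dvd hdvd hP
  rw [hmindeg] at this
  omega

/-- For a primitive element `α` of `F_{p^N}` with `N ≥ 2^{r+m-1}`, the `r × m` matrix with
entries `α^{2^{i+j}}` is superregular. -/
theorem power_two_exponent_superregular {F : Type*} [Field F] [Fintype F]
    {p N : ℕ} (hp : p.Prime) (hcard : Fintype.card F = p ^ N)
    (α : F) (hα : orderOf α = p ^ N - 1)
    {r m : ℕ} (hr : 0 < r) (hm : 0 < m) (hN : 2 ^ (r + m - 1) ≤ N)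
    (A : Matrix (Fin r) (Fin m) F)
    (hA : ∀ i j, A i j = α ^ 2 ^ ((i : ℕ) + (j : ℕ))) :
    Superregular A := by
  haveI : Fact p.Prime := ⟨hp⟩
  have hN0 : 0 < N := lt_of_lt_of_le (Nat.pow_pos two_pos) hN
  -- characteristic of F is p
  haveI hchar : CharP F p := by
    obtain ⟨q, hq⟩ := CharP.exists F
    haveI := hq
    have hq' : q.Prime := by
      have h1 : (1 : F) ≠ 0 := one_ne_zero
      exact CharP.char_is_prime F q
    obtain ⟨n, hqp, hcard'⟩ := FiniteField.card F q
    rw [hcard] at hcard'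
    have : p ∣ q ^ (n : ℕ) := hcard' ▸ dvd_pow_self p hN0.ne'
    have hpq : p = q := by
      have := hp.dvd_of_dvd_pow this
      exact ((Nat.prime_dvd_prime_iff_eq hp hq').mp this)
    rwa [hpq]
  letI : Algebra (ZMod p) F := ZMod.algebra _ _
  intro s f g hf hg
  -- exponent function
  set a : Fin s → ℕ := fun k => (f k : ℕ) with ha_def
  set b : Fin s → ℕ := fun k => (g k : ℕ) with hb_def
  have ha : StrictMono a := fun i j hij => hf hij
  have hb : StrictMono b := fun i j hij => hg hij
  set e : Equiv.Perm (Fin s) → ℕ := fun σ => ∑ k, 2 ^ (a (σ k) + b k) with he_def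
  -- the determinant as evaluation of a polynomial
  set P : Polynomial (ZMod p) :=
    ∑ σ : Equiv.Perm (Fin s),
      Polynomial.C (((Equiv.Perm.sign σ : ℤ) : ZMod p)) * Polynomial.X ^ e σ with hP_def
  have haeval : Polynomial.aeval α P = (A.submatrix f g).det := by
    rw [hP_def, map_sum, Matrix.det_apply]
    apply Finset.sum_congr rfl
    intro σ _
    rw [_root_.map_mul, _root_.map_pow, Polynomial.aeval_X, Polynomial.aeval_C]
    have h1 : ∏ k, (A.submatrix f g) (σ k) k = α ^ e σ := by
      simp only [he_def]
      rw [← Finset.prod_pow_eq_pow_sum]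
      apply Finset.prod_congr rfl
      intro k _
      rw [Matrix.submatrix_apply, hA]
    rw [h1]
    have h2 : algebraMap (ZMod p) F ((Equiv.Perm.sign σ : ℤ) : ZMod p)
        = ((Equiv.Perm.sign σ : ℤ) : F) := by
      rw [map_intCast]
    rw [h2, Units.smul_def, zsmul_eq_mul]
  -- strict maximality of the identity exponent
  have hemax : ∀ σ : Equiv.Perm (Fin s), σ ≠ 1 → e σ < e 1 := by
    intro σ hσ
    simpa [he_def] using sum_pow_two_perm_lt a b ha hb σ hσ
  -- P is nonzero: its coefficient at e 1 is 1
  have hcoeff : P.coeff (e 1) = 1 := by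
    rw [hP_def, Polynomial.finset_sum_coeff]
    rw [Finset.sum_eq_single (1 : Equiv.Perm (Fin s))]
    · simp
    · intro σ _ hσ
      rw [Polynomial.coeff_C_mul, Polynomial.coeff_X_pow, if_neg (hemax σ hσ).ne', mul_zero]
    · intro h
      exact absurd (Finset.mem_univ _) h
  have hPne : P ≠ 0 := fun h => by simp [h] at hcoeff
  -- degree bound
  have hdeg : P.natDegree < N := by
    have hE : e 1 < 2 ^ (r + m - 1) := by
      apply sum_pow_two_lt
      · intro i j hij
        have : a i + b i = a j + b j := by simpa [he_def] using hij
        by_contra hc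
        rcases lt_or_gt_of_ne hc with h | h
        · have := Nat.add_lt_add (ha h) (hb h); omega
        · have := Nat.add_lt_add (ha h) (hb h); omega
      · intro k
        have h1 : a k ≤ r - 1 := Nat.le_sub_one_of_lt (f k).isLt
        have h2 : b k ≤ m - 1 := Nat.le_sub_one_of_lt (g k).isLt
        simp only [Equiv.Perm.one_apply]
        omega
    have hdegsum : P.natDegree ≤ e 1 := by
      rw [hP_def]
      apply Polynomial.natDegree_sum_le_of_forall_le
      intro σ _
      apply le_trans (Polynomial.natDegree_C_mul_le _ _)
      apply le_trans (Polynomial.natDegree_X_pow_le _)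
      rcases eq_or_ne σ 1 with rfl | hσ
      · exact le_rfl
      · exact (hemax σ hσ).le
    omega
  -- conclude
  have := aeval_primitive_ne_zero hp hN0 hcard α hα P hPne hdeg
  rw [haeval] at this
  exact this
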